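/- Let f(w) = (1/2)⟨w, Aw⟩ − ⟨b, w⟩ + c be a quadratic function on ℝⁿ with A symmetric positive definite and unique minimizer x* = A⁻¹b. Let (xᵏ)ₖ≥₀ be a sequence in ℝⁿ such that for every k: if ∇f(xᵏ) = 0 then xᵏ⁺¹ = xᵏ, and if ∇f(xᵏ) ≠ 0 then f(xᵏ⁺¹) ≤ f(xᵏ − t*ₖ·∇f(xᵏ)) where t*ₖ := ‖∇f(xᵏ)‖²/⟨∇f(xᵏ), A∇f(xᵏ)⟩. Then the sequence (xᵏ) converges to x* (in the Euclidean norm). -/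

import Mathlib

open Matrix

private lemma sd_quad_smul {n : ℕ} (A : Matrix (Fin n) (Fin n) ℝ) (t : ℝ) (v : Fin n → ℝ) :
    (t • v) ⬝ᵥ A.mulVec (t • v) = t^2 * (v ⬝ᵥ A.mulVec v) := by
  rw [smul_dotProduct, mulVec_smul, dotProduct_smul, smul_eq_mul, smul_eq_mul]; ring

private lemma sd_dot_self_nonneg {n : ℕ} (v : Fin n → ℝ) : 0 ≤ v ⬝ᵥ v :=
  Finset.sum_nonneg fun i _ => mul_self_nonneg (v i)

private lemma sd_quad_bounds {n : ℕ} (hn : n ≠ 0) (A : Matrix (Fin n) (Fin n) ℝ)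
    (hA : A.PosDef) :
    ∃ m M : ℝ, 0 < m ∧ m ≤ M ∧
      ∀ v : Fin n → ℝ, m * (v ⬝ᵥ v) ≤ v ⬝ᵥ A.mulVec v ∧ v ⬝ᵥ A.mulVec v ≤ M * (v ⬝ᵥ v) := by
  haveI : NeZero n := ⟨hn⟩
  set Q : (Fin n → ℝ) → ℝ := fun v => v ⬝ᵥ A.mulVec v with hQ
  have hQc : Continuous Q := by
    simp only [hQ, dotProduct, Matrix.mulVec]; fun_prop
  have hNc : Continuous (fun v : Fin n → ℝ => v ⬝ᵥ v) := by
    simp only [dotProduct]; fun_prop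
  set S : Set (Fin n → ℝ) := {v | v ⬝ᵥ v = 1} with hS
  have hclosed : IsClosed S := isClosed_eq hNc continuous_const
  have hbdd : Bornology.IsBounded S := by
    apply Bornology.IsBounded.subset (Metric.isBounded_closedBall (x := (0 : Fin n → ℝ)) (r := 1))
    intro v hv
    simp only [Metric.mem_closedBall, dist_zero_right]
    rw [pi_norm_le_iff_of_nonneg zero_le_one]
    intro i
    rw [Real.norm_eq_abs, abs_le_one_iff_mul_self_le_one]
    calc v i * v i ≤ v ⬝ᵥ v := by
          refine Finset.single_le_sum (fun j _ => mul_self_nonneg (v j)) (Finset.mem_univ i)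
      _ = 1 := hv
  have hcomp : IsCompact S := Metric.isCompact_of_isClosed_isBounded hclosed hbdd
  have hne : S.Nonempty := by
    refine ⟨Pi.single (0 : Fin n) 1, ?_⟩
    simp [hS, dotProduct, Pi.single_apply]
  obtain ⟨v₁, hv₁, hmin⟩ := hcomp.exists_isMinOn hne hQc.continuousOn
  obtain ⟨v₂, hv₂, hmax⟩ := hcomp.exists_isMaxOn hne hQc.continuousOn
  refine ⟨Q v₁, Q v₂, ?_, hmax hv₁, ?_⟩
  · have hv₁0 : v₁ ≠ 0 := by
      intro h; rw [hS] at hv₁; simp [h] at hv₁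
    have := hA.dotProduct_mulVec_pos hv₁0
    simpa [star_trivial] using this
  · intro v
    rcases eq_or_ne (v ⬝ᵥ v) 0 with h0 | h0
    · have hv0 : v = 0 := dotProduct_self_eq_zero.mp h0
      subst hv0
      simp [hQ]
    · have hpos : 0 < v ⬝ᵥ v := lt_of_le_of_ne (sd_dot_self_nonneg v) (Ne.symm h0)
      set t : ℝ := Real.sqrt (v ⬝ᵥ v) with ht
      have htpos : 0 < t := Real.sqrt_pos.mpr hpos
      have ht2 : t ^ 2 = v ⬝ᵥ v := Real.sq_sqrt hpos.le
      set u : Fin n → ℝ := t⁻¹ • v with hu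
      have huS : u ∈ S := by
        rw [hS, Set.mem_setOf_eq, hu]
        rw [smul_dotProduct, dotProduct_smul, smul_eq_mul, smul_eq_mul]
        field_simp
        rw [← ht2]
      have hv_eq : v = t • u := by
        rw [hu, smul_smul, mul_inv_cancel₀ htpos.ne', one_smul]
      have hQv : Q v = t ^ 2 * Q u := by rw [hv_eq, hQ]; exact sd_quad_smul A t u
      have h1 : Q v₁ ≤ Q u := hmin huS
      have h2 : Q u ≤ Q v₂ := hmax huS
      have hQv' : v ⬝ᵥ A.mulVec v = t ^ 2 * Q u := hQv
      constructor
      · rw [hQv', ← ht2]; nlinarith [sq_nonneg t]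
      · rw [hQv', ← ht2]; nlinarith [sq_nonneg t]


/-- Under the same descent assumptions as Statement 8, the sequence
`(xᵏ)` converges to the unique minimizer `x* = A⁻¹b`. -/
theorem stmt10 {n : ℕ} (A : Matrix (Fin n) (Fin n) ℝ) (hA : A.PosDef)
    (b : Fin n → ℝ) (c : ℝ) (f : (Fin n → ℝ) → ℝ)
    (hf : ∀ w, f w = (1/2) * (w ⬝ᵥ A.mulVec w) - b ⬝ᵥ w + c)
    (xstar : Fin n → ℝ) (hxstar : xstar = A⁻¹.mulVec b)
    (x : ℕ → Fin n → ℝ)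
    (hstep0 : ∀ k, A.mulVec (x k) - b = 0 → x (k + 1) = x k)
    (hstep : ∀ k, A.mulVec (x k) - b ≠ 0 →
      f (x (k + 1)) ≤
        f (x k - (((A.mulVec (x k) - b) ⬝ᵥ (A.mulVec (x k) - b)) /
            ((A.mulVec (x k) - b) ⬝ᵥ A.mulVec (A.mulVec (x k) - b))) • (A.mulVec (x k) - b))) :
    Filter.Tendsto x Filter.atTop (nhds xstar) := by
  rcases eq_or_ne n 0 with hn | hn
  · subst hn
    have hx : x = fun _ => xstar := funext fun k => Subsingleton.elim _ _
    rw [hx]; exact tendsto_const_nhds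
  -- main case
  have hsym : ∀ v w : Fin n → ℝ, v ⬝ᵥ A.mulVec w = w ⬝ᵥ A.mulVec v := by
    intro v w
    have hs : Aᵀ = A := hA.1
    rw [dotProduct_mulVec, ← mulVec_transpose, hs, dotProduct_comm]
  have hAinv : IsUnit A.det := hA.det_pos.ne'.isUnit
  have hAx : A.mulVec xstar = b := by
    rw [hxstar, mulVec_mulVec, Matrix.mul_nonsing_inv A hAinv, one_mulVec]
  obtain ⟨m, M, hm, hmM, hb⟩ := sd_quad_bounds hn A hA
  have hM : (0:ℝ) < M := lt_of_lt_of_le hm hmM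
  set d : ℕ → Fin n → ℝ := fun k => x k - xstar with hd
  set g : ℕ → Fin n → ℝ := fun k => A.mulVec (x k) - b with hg
  have hgd : ∀ k, g k = A.mulVec (d k) := by
    intro k; rw [hg, hd]; simp only [mulVec_sub, hAx]
  set E : ℕ → ℝ := fun k => d k ⬝ᵥ A.mulVec (d k) with hE
  have hEnonneg : ∀ k, 0 ≤ E k := by
    intro k
    rcases eq_or_ne (d k) 0 with h | h
    · simp [hE, h]
    · exact (hA.dotProduct_mulVec_pos h).le
  -- f w - f xstar = (1/2) * (w - xstar) ⬝ᵥ A (w - xstar)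
  have hfE : ∀ w : Fin n → ℝ,
      f w = f xstar + (1/2) * ((w - xstar) ⬝ᵥ A.mulVec (w - xstar)) := by
    intro w
    have h1 : w ⬝ᵥ A.mulVec xstar = b ⬝ᵥ w := by rw [hAx, dotProduct_comm]
    have h2 : xstar ⬝ᵥ A.mulVec w = b ⬝ᵥ w := by rw [hsym xstar w, h1]
    have h3 : xstar ⬝ᵥ A.mulVec xstar = b ⬝ᵥ xstar := by rw [hAx, dotProduct_comm]
    rw [hf, hf]
    simp only [mulVec_sub, sub_dotProduct, dotProduct_sub, h1, h2, h3]
    ring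
  -- expansion of f along a step
  have hexp : ∀ (w s : Fin n → ℝ) (t : ℝ),
      f (w - t • s) = f w - t * (s ⬝ᵥ (A.mulVec w - b)) + t^2/2 * (s ⬝ᵥ A.mulVec s) := by
    intro w s t
    rw [hf, hf]
    simp only [mulVec_sub, mulVec_smul, sub_dotProduct, dotProduct_sub,
      smul_dotProduct, dotProduct_smul, smul_eq_mul]
    rw [hsym s w, dotProduct_comm s b]
    ring
  -- the key contraction estimate
  set r : ℝ := 1 - m / M with hr
  have hr0 : 0 ≤ r := by
    rw [hr]; have : m / M ≤ 1 := (div_le_one hM).mpr hmM; linarith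
  have hr1 : r < 1 := by
    rw [hr]; have : 0 < m / M := div_pos hm hM; linarith
  have key : ∀ k, E (k + 1) ≤ r * E k := by
    intro k
    rcases eq_or_ne (g k) 0 with h0 | h0
    · have hx1 : x (k + 1) = x k := hstep0 k h0
      have hEk : E k = 0 := by
        rw [hE, hgd] at *
        have : A.mulVec (d k) = 0 := h0
        simp [hE, this]
      have hEk1 : E (k + 1) = E k := by
        simp only [hE, hd, hx1]
      rw [hEk1, hEk]; simp
    · -- g k ≠ 0
      have hdk0 : d k ≠ 0 := by
        intro h
        apply h0
        rw [hgd, h, mulVec_zero]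
      have hEkpos : 0 < E k := hA.dotProduct_mulVec_pos hdk0
      set Ng : ℝ := g k ⬝ᵥ g k with hNg
      set Qg : ℝ := g k ⬝ᵥ A.mulVec (g k) with hQg
      have hNg0 : g k ⬝ᵥ g k ≠ 0 := fun h => h0 (dotProduct_self_eq_zero.mp h)
      have hNgpos : 0 < Ng := by
        rw [hNg]
        exact lt_of_le_of_ne (sd_dot_self_nonneg _) (Ne.symm hNg0)
      have hQgpos : 0 < Qg := hA.dotProduct_mulVec_pos h0
      -- value after exact line search
      have hstep' := hstep k h0
      have hls : f (x k - (Ng / Qg) • g k) = f (x k) - Ng^2 / (2 * Qg) := by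
        rw [hexp (x k) (g k) (Ng / Qg)]
        have : g k ⬝ᵥ (A.mulVec (x k) - b) = Ng := by rw [hNg, hg]
        rw [this, ← hQg]
        field_simp
        ring
      have hde : f (x (k+1)) ≤ f (x k) - Ng^2 / (2 * Qg) := by
        rw [← hls]; exact hstep'
      -- translate to E
      have hEf : ∀ j, f (x j) = f xstar + (1/2) * E j := fun j => hfE (x j)
      have hEineq : E (k+1) ≤ E k - Ng^2 / Qg := by
        have h1 := hde
        rw [hEf (k+1), hEf k] at h1
        have h2 : Ng^2 / (2 * Qg) = (1/2) * (Ng^2 / Qg) := by field_simp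
        rw [h2] at h1
        linarith
      -- Cauchy–Schwarz etc.
      have hEdg : E k = d k ⬝ᵥ g k := by rw [hE, hgd]
      have hcs : (d k ⬝ᵥ g k)^2 ≤ (d k ⬝ᵥ d k) * Ng := by
        have := Finset.sum_mul_sq_le_sq_mul_sq Finset.univ (d k) (g k)
        simp only [dotProduct, hNg]
        calc (∑ i, d k i * g k i)^2 ≤ (∑ i, (d k i)^2) * (∑ i, (g k i)^2) := this
          _ = (∑ i, d k i * d k i) * (∑ i, g k i * g k i) := by
              congr 1 <;> (apply Finset.sum_congr rfl; intro i _; ring)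
      have hcoer : m * (d k ⬝ᵥ d k) ≤ E k := (hb (d k)).1
      have hQgM : Qg ≤ M * Ng := (hb (g k)).2
      have h1 : m * E k ≤ Ng := by
        have h3 : m * (E k)^2 ≤ E k * Ng := by
          calc m * (E k)^2 = m * (d k ⬝ᵥ g k)^2 := by rw [hEdg]
            _ ≤ m * ((d k ⬝ᵥ d k) * Ng) := by
                apply mul_le_mul_of_nonneg_left hcs hm.le
            _ = (m * (d k ⬝ᵥ d k)) * Ng := by ring
            _ ≤ E k * Ng := mul_le_mul_of_nonneg_right hcoer hNgpos.le
        nlinarith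
      have h2 : (m / M) * E k ≤ Ng^2 / Qg := by
        rw [div_mul_eq_mul_div, div_le_div_iff₀ hM hQgpos]
        calc m * E k * Qg ≤ Ng * (M * Ng) := by
              apply mul_le_mul h1 hQgM hQgpos.le hNgpos.le
          _ = Ng^2 * M := by ring
      calc E (k+1) ≤ E k - Ng^2/Qg := hEineq
        _ ≤ E k - (m/M) * E k := by linarith
        _ = r * E k := by rw [hr]; ring
  -- geometric decay
  have hgeo : ∀ k, E k ≤ E 0 * r ^ k := by
    intro k
    induction k with
    | zero => simp
    | succ k ih =>
      calc E (k+1) ≤ r * E k := key k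
        _ ≤ r * (E 0 * r ^ k) := mul_le_mul_of_nonneg_left ih hr0
        _ = E 0 * r ^ (k+1) := by ring
  have hEto0 : Filter.Tendsto E Filter.atTop (nhds 0) := by
    have hgeoto : Filter.Tendsto (fun k => E 0 * r ^ k) Filter.atTop (nhds 0) := by
      have := tendsto_pow_atTop_nhds_zero_of_lt_one hr0 hr1
      simpa using (this.const_mul (E 0))
    exact squeeze_zero hEnonneg hgeo hgeoto
  -- from E → 0 to x → xstar
  have hdd0 : Filter.Tendsto (fun k => d k ⬝ᵥ d k) Filter.atTop (nhds 0) := by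
    have hlim : Filter.Tendsto (fun k => (1/m) * E k) Filter.atTop (nhds 0) := by
      simpa using hEto0.const_mul (1/m)
    refine squeeze_zero (fun k => sd_dot_self_nonneg (d k)) (fun k => ?_) hlim
    have h := (hb (d k)).1
    have hEdef : d k ⬝ᵥ A.mulVec (d k) = E k := rfl
    rw [hEdef] at h
    calc d k ⬝ᵥ d k = (1/m) * (m * (d k ⬝ᵥ d k)) := by field_simp
      _ ≤ (1/m) * E k := by
          apply mul_le_mul_of_nonneg_left h (by positivity)
  have hnorm : ∀ k, ‖x k - xstar‖ ≤ Real.sqrt (d k ⬝ᵥ d k) := by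
    intro k
    rw [pi_norm_le_iff_of_nonneg (Real.sqrt_nonneg _)]
    intro i
    rw [Real.norm_eq_abs, Real.le_sqrt (abs_nonneg _) (sd_dot_self_nonneg _)]
    rw [sq_abs]
    have : (x k - xstar) i ^ 2 = d k i * d k i := by rw [hd]; ring
    rw [this]
    exact Finset.single_le_sum (fun j _ => mul_self_nonneg (d k j)) (Finset.mem_univ i)
  have hsq : Filter.Tendsto (fun k => Real.sqrt (d k ⬝ᵥ d k)) Filter.atTop (nhds 0) := by
    have := (Real.continuous_sqrt.tendsto 0).comp hdd0
    simpa [Function.comp_def] using this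
  rw [tendsto_iff_norm_sub_tendsto_zero]
  exact squeeze_zero (fun k => norm_nonneg _) hnorm hsq
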